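/- arXiv:2308.07765 — 3 statements merged into one kernel-verified Lean document; each statement's English description precedes it below -/
import Mathlib

section
/- Let n ≥ 1 and let f = Σ_α c_α x^α ∈ ℂ[x_1,…,x_n] be a nonzero polynomial with full monomial support, i.e., c_α ≠ 0 for every lattice point α ∈ Newt(f) ∩ ℕ^n. Then for every j ∈ {1,…,n}, Newt(∂f/∂x_j) = conv( ∂_j Newt(f) ∩ ℤ^n ), the convex hull of the lattice points of ∂_j Newt(f) (with the convention that the convex hull of the empty set is empty). -/
open MvPolynomial

/-- The Newton polytope of a multivariate polynomial: the convex hull (in `σ → ℝ`)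
of its exponent vectors. -/
noncomputable def Newt {σ : Type*} (f : MvPolynomial σ ℂ) : Set (σ → ℝ) :=
  convexHull ℝ ((fun (α : σ →₀ ℕ) (j : σ) => (α j : ℝ)) '' (f.support : Set (σ →₀ ℕ)))

/-- The `j`-th standard basis vector of `σ → ℝ`. -/
def stdBasis {σ : Type*} [DecidableEq σ] (j : σ) : σ → ℝ :=
  fun k => if k = j then 1 else 0

/-- The "partial derivative" `∂_j P = {α - e_j : α ∈ P, α_j ≥ 1}` of a set `P ⊆ ℝ^σ`. -/
def polyDeriv {σ : Type*} [DecidableEq σ] (j : σ) (P : Set (σ → ℝ)) : Set (σ → ℝ) :=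
  {y | ∃ α ∈ P, 1 ≤ α j ∧ y = α - stdBasis j}

/-- Label vector for the Cayley construction: `0` for `i = 0` and `e_{i-1}` otherwise. -/
def cayLabel {m : ℕ} (i : Fin (m + 1)) : Fin m → ℝ :=
  fun k => if (k : ℕ) + 1 = (i : ℕ) then 1 else 0

/-- The Cayley polytope `Cay(P_0, …, P_m) ⊆ ℝ^n × ℝ^m`, the convex hull of the union of
`P_0 × {0}` and `P_i × {e_i}` for `i = 1, …, m`. -/
noncomputable def cayley {n m : ℕ} (P : Fin (m + 1) → Set (Fin n → ℝ)) :
    Set ((Fin n ⊕ Fin m) → ℝ) :=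
  convexHull ℝ (⋃ i : Fin (m + 1), (fun p : Fin n → ℝ => Sum.elim p (cayLabel i)) '' P i)

/-- The face of `P` exposed by `v`: points of `P` minimizing `⟨·, v⟩`. -/
def exposedFace {σ : Type*} [Fintype σ] (P : Set (σ → ℝ)) (v : σ → ℝ) : Set (σ → ℝ) :=
  {x ∈ P | ∀ y ∈ P, (∑ k, x k * v k) ≤ ∑ k, y k * v k}

/-- The Lagrangian `Φ_F = f_0 - ∑ λ_i f_i` as a polynomial in the variables `x ⊕ λ`. -/
noncomputable def lagrangian {n m : ℕ} (F : Fin (m + 1) → MvPolynomial (Fin n) ℂ) :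
    MvPolynomial (Fin n ⊕ Fin m) ℂ :=
  rename Sum.inl (F 0) - ∑ i : Fin m, X (Sum.inr i) * rename Sum.inl (F i.succ)

/-- The Lagrange system `L_F = (∂Φ_F/∂x_1, …, ∂Φ_F/∂x_n, f_1, …, f_m)`,
a family of `n + m` polynomials in the `n + m` variables `x ⊕ λ`. -/
noncomputable def lagrangeSystem {n m : ℕ} (F : Fin (m + 1) → MvPolynomial (Fin n) ℂ) :
    (Fin n ⊕ Fin m) → MvPolynomial (Fin n ⊕ Fin m) ℂ :=
  Sum.elim (fun j => pderiv (Sum.inl j) (lagrangian F))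
    (fun i => rename Sum.inl (F i.succ))

/-- Admissibility of a tuple of supports `A = (A_0, …, A_m)` of finite subsets of `ℕ^n`. -/
def IsAdmissible {n m : ℕ} (A : Fin (m + 1) → Finset (Fin n → ℕ)) : Prop :=
  (∀ i, ∃ v ∈ A i,
      {w : Fin n → ℝ | ∀ α ∈ A i, (∑ j, (v j : ℝ) * w j) ≤ ∑ j, (α j : ℝ) * w j} =
        {w : Fin n → ℝ | ∀ j, 0 ≤ w j}) ∧
  (∀ i, ∀ j : Fin n, ∃ α ∈ A i, α j = 0) ∧
  (∃ j : Fin n, (fun k => if k = j then 1 else 0) ∈ A 0)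

/-- The sparse polynomial `f_i = ∑_{α ∈ A_i} c_{α,i} x^α` with support `A i` and
coefficient tuple `c`. -/
noncomputable def sparsePoly {n m : ℕ} (A : Fin (m + 1) → Finset (Fin n → ℕ))
    (c : (Σ i : Fin (m + 1), {α // α ∈ A i}) → ℂ) (i : Fin (m + 1)) :
    MvPolynomial (Fin n) ℂ :=
  ∑ α ∈ (A i).attach, c ⟨i, α⟩ • ∏ j, X j ^ ((α : Fin n → ℕ) j)

/-- The Jacobian matrix `(∂f_i/∂x_j(x))` of `F = (f_0, …, f_m)` at `x`. -/
noncomputable def jacobian {n m : ℕ} (F : Fin (m + 1) → MvPolynomial (Fin n) ℂ)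
    (x : Fin n → ℂ) : Matrix (Fin n) (Fin (m + 1)) ℂ :=
  Matrix.of fun j i => eval x (pderiv j (F i))

/-- Homogenization `f̃ = ∑_{m ∈ S} c_m ∏_r X_r^{⟨m, ρ(r)⟩ + a_r}` of
`f = ∑_{m ∈ S} c_m x^m` with respect to ray data `(ρ, a)`. -/
noncomputable def homog {n : ℕ} {R : Type*} [Fintype R]
    (ρ : R → Fin n → ℤ) (a : R → ℤ) (S : Finset (Fin n → ℕ)) (c : (Fin n → ℕ) → ℂ) :
    MvPolynomial R ℂ :=
  ∑ m ∈ S, c m • ∏ r, X r ^ ((∑ j, (m j : ℤ) * ρ r j) + a r).toNat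

lemma coeff_pderiv' {n : ℕ} (j : Fin n) (f : MvPolynomial (Fin n) ℂ) (m : Fin n →₀ ℕ) :
    coeff m (pderiv j f) = ((m j : ℂ) + 1) * coeff (m + Finsupp.single j 1) f := by
  induction f using MvPolynomial.induction_on' with
  | add p q hp hq => simp [map_add, coeff_add, hp, hq]; ring
  | monomial s a =>
    rw [pderiv_monomial]
    simp only [coeff_monomial]
    by_cases h : s = m + Finsupp.single j 1
    · subst h
      have h1 : m + Finsupp.single j 1 - Finsupp.single j 1 = m := by
        ext k; simp [Finsupp.sub_apply, Finsupp.single_apply]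
      rw [if_pos h1, if_pos rfl]
      simp [Finsupp.single_apply]
      ring
    · rw [if_neg h]
      by_cases h2 : s - Finsupp.single j 1 = m
      · rw [if_pos h2]
        have hsj : s j = 0 := by
          by_contra hsj
          apply h
          ext k
          have := congrFun (congrArg (fun g : Fin n →₀ ℕ => (g : Fin n → ℕ)) h2) k
          simp [Finsupp.sub_apply, Finsupp.single_apply] at this ⊢
          by_cases hk : k = j
          · subst hk
            simp at this ⊢
            omega
          · simp only [if_neg (Ne.symm hk)] at this ⊢
            omega
        simp [hsj]
      · rw [if_neg h2]; ring

lemma support_pderiv' {n : ℕ} (j : Fin n) (f : MvPolynomial (Fin n) ℂ) (m : Fin n →₀ ℕ) :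
    m ∈ (pderiv j f).support ↔ m + Finsupp.single j 1 ∈ f.support := by
  simp only [mem_support_iff, coeff_pderiv', mul_ne_zero_iff]
  constructor
  · exact fun h => h.2
  · exact fun h => ⟨by exact_mod_cast Nat.cast_add_one_ne_zero (R := ℂ) (m j), h⟩

/-- For a nonzero polynomial with full monomial support,
`Newt(∂f/∂x_j)` equals the convex hull of the lattice points of `∂_j Newt(f)`. -/
theorem newt_pderiv_of_full_support {n : ℕ} (hn : 1 ≤ n) (f : MvPolynomial (Fin n) ℂ)
    (hf : f ≠ 0)
    (hfull : ∀ α : Fin n →₀ ℕ, (fun j => (α j : ℝ)) ∈ Newt f → coeff α f ≠ 0)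
    (j : Fin n) :
    Newt (pderiv j f) =
      convexHull ℝ {y | y ∈ polyDeriv j (Newt f) ∧ ∀ k, ∃ z : ℤ, y k = (z : ℝ)} := by
  classical
  have hnonneg : Newt f ⊆ {x : Fin n → ℝ | ∀ k, 0 ≤ x k} := by
    apply convexHull_min
    · rintro _ ⟨α, hα, rfl⟩ k; positivity
    · have hset : {x : Fin n → ℝ | ∀ k, 0 ≤ x k} =
          Set.pi Set.univ (fun _ => Set.Ici (0:ℝ)) := by
        ext x; simp [Set.mem_pi, Pi.le_def]
      rw [hset]; exact convex_pi fun _ _ => convex_Ici 0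
  unfold Newt
  congr 1
  ext y
  constructor
  · rintro ⟨m, hm, rfl⟩
    have hm' : m ∈ (pderiv j f).support := hm
    rw [support_pderiv' j f m] at hm'
    set β := m + Finsupp.single j 1 with hβ
    have hβNewt : (fun k => (β k : ℝ)) ∈ Newt f :=
      subset_convexHull ℝ _ ⟨β, hm', rfl⟩
    refine ⟨⟨fun k => (β k : ℝ), hβNewt, ?_, ?_⟩, fun k => ⟨(m k : ℤ), by simp⟩⟩
    · show (1:ℝ) ≤ (β j : ℝ)
      have : β j = m j + 1 := by simp [hβ, Finsupp.single_apply]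
      rw [this]; exact_mod_cast Nat.le_add_left 1 (m j)
    · funext k
      by_cases hk : k = j
      · subst hk
        simp [hβ, stdBasis, Finsupp.single_apply]
      · simp [hβ, stdBasis, hk, Finsupp.single_apply, Ne.symm hk]
  · rintro ⟨⟨α, hα, hαj, rfl⟩, hint⟩
    have hαnn : ∀ k, (0:ℝ) ≤ α k := hnonneg hα
    choose g hg using hint
    -- hg k : (α - stdBasis j) k = g k
    have hαval : ∀ k, α k = (g k : ℝ) + stdBasis j k := by
      intro k
      have := hg k
      simp only [Pi.sub_apply] at this
      linarith
    set β : Fin n →₀ ℕ :=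
      Finsupp.equivFunOnFinite.symm (fun k => (g k + if k = j then 1 else 0).toNat) with hβ
    have hβapp : ∀ k, (β k : ℤ) = g k + if k = j then 1 else 0 := by
      intro k
      have hnn : (0:ℤ) ≤ g k + if k = j then 1 else 0 := by
        have h1 := hαnn k
        rw [hαval k] at h1
        have : ((g k + if k = j then 1 else 0 : ℤ) : ℝ) = (g k : ℝ) + stdBasis j k := by
          push_cast; simp [stdBasis]
        exact_mod_cast (by rw [this]; exact h1 : (0:ℝ) ≤ ((g k + if k = j then 1 else 0 : ℤ) : ℝ))
      simp [hβ, Finsupp.equivFunOnFinite, Int.toNat_of_nonneg hnn]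
    have hβα : ∀ k, (β k : ℝ) = α k := by
      intro k
      have h1 := hβapp k
      rw [hαval k]
      simp only [stdBasis]
      by_cases hk : k = j
      · rw [if_pos hk] at h1; rw [if_pos hk]
        exact_mod_cast h1
      · rw [if_neg hk] at h1; rw [if_neg hk]
        exact_mod_cast h1
    have hβNewt : (fun k => (β k : ℝ)) ∈ Newt f := by
      have : (fun k => (β k : ℝ)) = α := funext hβα
      rw [this]; exact hα
    have hβsupp : β ∈ f.support := mem_support_iff.mpr (hfull β hβNewt)
    have hβj : 1 ≤ β j := by
      have : (1:ℝ) ≤ (β j : ℝ) := by rw [hβα j]; exact hαj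
      exact_mod_cast this
    set m : Fin n →₀ ℕ := β - Finsupp.single j 1 with hm
    have hmβ : m + Finsupp.single j 1 = β := by
      ext k
      simp only [hm, Finsupp.add_apply, Finsupp.sub_apply, Finsupp.single_apply]
      by_cases hk : j = k
      · subst hk; simp; omega
      · simp [hk]
    have hmsupp : m ∈ (pderiv j f).support := by
      rw [support_pderiv' j f m, hmβ]; exact hβsupp
    refine ⟨m, hmsupp, ?_⟩
    funext k
    show (m k : ℝ) = (α - stdBasis j) k
    have : (m k : ℝ) = (β k : ℝ) - (if j = k then 1 else 0) := by
      have hk := congrFun (congrArg (fun g : Fin n →₀ ℕ => (g : Fin n → ℕ)) hmβ) k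
      simp only [Finsupp.coe_add, Pi.add_apply, Finsupp.single_apply] at hk
      split_ifs at hk ⊢ with h
      · rw [← hk]; push_cast; ring
      · simp only [add_zero] at hk; rw [hk]; ring
    rw [this, hβα k]
    simp only [Pi.sub_apply, stdBasis]
    congr 1
    by_cases hk : k = j
    · subst hk; simp
    · simp [hk, Ne.symm hk]
end

section
/- Let P_0, P_1, …, P_m ⊆ ℝ^n be polytopes (convex hulls of nonempty finite sets) and let w ∈ ℝ^n. For each i set μ_i = min_{x ∈ P_i} ⟨x, w⟩ and let w̃ = (w, μ_0 − μ_1, …, μ_0 − μ_m) ∈ ℝ^n × ℝ^m. Then the face of the Cayley polytope Cay(P_0,…,P_m) exposed by w̃ equals the Cayley polytope of the exposed faces: Cay(P_0,…,P_m)^{w̃} = Cay(P_0^w, …, P_m^w). -/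
open MvPolynomial

noncomputable def lfun {σ : Type*} [Fintype σ] (v : σ → ℝ) : (σ → ℝ) →ₗ[ℝ] ℝ where
  toFun x := ∑ k, x k * v k
  map_add' x y := by simp [add_mul, Finset.sum_add_distrib]
  map_smul' c x := by simp [Finset.mul_sum, mul_assoc]

lemma lfun_apply {σ : Type*} [Fintype σ] (v x : σ → ℝ) : lfun v x = ∑ k, x k * v k := rfl

lemma face_hull {E : Type} [AddCommGroup E] [Module ℝ E] (g : E →ₗ[ℝ] ℝ)
    (A : Set E) (μ : ℝ) (hA : ∀ a ∈ A, μ ≤ g a) :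
    {x ∈ convexHull ℝ A | g x = μ} = convexHull ℝ {a ∈ A | g a = μ} := by
  apply Set.Subset.antisymm
  · rintro x ⟨hx, hgx⟩
    rw [convexHull_eq] at hx
    obtain ⟨ι, t, wt, z, hw0, hw1, hz, rfl⟩ := hx
    have hgc : g (t.centerMass wt z) = ∑ i ∈ t, wt i * g (z i) := by
      rw [Finset.centerMass_eq_of_sum_1 _ _ hw1, map_sum]
      simp [smul_eq_mul]
    have hzero : ∀ i ∈ t, wt i * (g (z i) - μ) = 0 := by
      have hsum : ∑ i ∈ t, wt i * (g (z i) - μ) = 0 := by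
        simp only [mul_sub, Finset.sum_sub_distrib, ← Finset.sum_mul, hw1, one_mul]
        rw [← hgc, hgx, sub_self]
      intro i hi
      exact (Finset.sum_eq_zero_iff_of_nonneg (fun i hi =>
        mul_nonneg (hw0 i hi) (sub_nonneg.2 (hA _ (hz i hi))))).1 hsum i hi
    rw [← Finset.centerMass_filter_ne_zero]
    apply Finset.centerMass_mem_convexHull
    · exact fun i hi => hw0 i (Finset.mem_filter.1 hi).1
    · rw [Finset.sum_filter_ne_zero, hw1]; norm_num
    · intro i hi
      rw [Finset.mem_filter] at hi
      refine ⟨hz i hi.1, ?_⟩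
      have := hzero i hi.1
      rcases mul_eq_zero.1 this with h | h
      · exact absurd h hi.2
      · linarith [sub_eq_zero.1 h]
  · intro x hx
    refine ⟨convexHull_mono (Set.sep_subset _ _) hx, ?_⟩
    have : g x ∈ g '' convexHull ℝ {a ∈ A | g a = μ} := Set.mem_image_of_mem _ hx
    rw [g.image_convexHull] at this
    have hsub : g '' {a ∈ A | g a = μ} ⊆ {μ} := by rintro y ⟨a, ⟨_, ha⟩, rfl⟩; exact ha
    have := convexHull_min hsub (convex_singleton μ) this
    simpa using this

lemma isLeast_image_hull {E : Type} [AddCommGroup E] [Module ℝ E] (g : E →ₗ[ℝ] ℝ)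
    (A : Set E) (μ : ℝ) (h1 : ∀ a ∈ A, μ ≤ g a) (h2 : ∃ a ∈ A, g a = μ) :
    IsLeast (g '' convexHull ℝ A) μ := by
  obtain ⟨a, ha, hga⟩ := h2
  constructor
  · exact ⟨a, subset_convexHull ℝ A ha, hga⟩
  · rintro y ⟨x, hx, rfl⟩
    have : convexHull ℝ A ⊆ {x | μ ≤ g x} :=
      convexHull_min h1 (convex_halfSpace_ge (LinearMap.isLinear g) μ)
    exact this hx

lemma main_face {σ : Type} [Fintype σ] (v : σ → ℝ) (A : Set (σ → ℝ)) (μ : ℝ)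
    (h1 : ∀ a ∈ A, μ ≤ lfun v a) (h2 : ∃ a ∈ A, lfun v a = μ) :
    exposedFace (convexHull ℝ A) v = convexHull ℝ {a ∈ A | lfun v a = μ} := by
  have hL := isLeast_image_hull (lfun v) A μ h1 h2
  rw [← face_hull (lfun v) A μ h1]
  ext x
  constructor
  · rintro ⟨hx, hmin⟩
    refine ⟨hx, le_antisymm ?_ (hL.2 ⟨x, hx, rfl⟩)⟩
    obtain ⟨a, ha, hga⟩ := hL.1
    have := hmin a ha
    show (lfun v) x ≤ μ
    rw [← hga]
    exact this
  · rintro ⟨hx, hgx⟩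
    refine ⟨hx, fun y hy => ?_⟩
    show (lfun v) x ≤ (lfun v) y
    rw [hgx]
    exact hL.2 ⟨y, hy, rfl⟩

lemma hull_iUnion_hull {ι E : Type*} [AddCommGroup E] [Module ℝ E] (B : ι → Set E) :
    convexHull ℝ (⋃ i, convexHull ℝ (B i)) = convexHull ℝ (⋃ i, B i) := by
  apply Set.Subset.antisymm
  · exact convexHull_min (Set.iUnion_subset fun i =>
      convexHull_mono (Set.subset_iUnion B i)) (convex_convexHull ℝ _)
  · exact convexHull_mono (Set.iUnion_mono fun i => subset_convexHull ℝ _)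

noncomputable def cayMap {n m : ℕ} (c : Fin m → ℝ) :
    (Fin n → ℝ) →ᵃ[ℝ] ((Fin n ⊕ Fin m) → ℝ) where
  toFun p := Sum.elim p c
  linear :=
    { toFun := fun p => Sum.elim p 0
      map_add' := fun p q => by funext x; cases x <;> simp
      map_smul' := fun r p => by funext x; cases x <;> simp }
  map_vadd' p v := by funext x; cases x <;> simp

/-- Taking exposed faces commutes with the Cayley construction:
for `w̃ = (w, μ_0 - μ_1, …, μ_0 - μ_m)` with `μ_i = min_{x ∈ P_i} ⟨x, w⟩`, one has
`Cay(P_0, …, P_m)^{w̃} = Cay(P_0^w, …, P_m^w)`. -/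
theorem cayley_exposedFace {n m : ℕ} (P : Fin (m + 1) → Set (Fin n → ℝ))
    (hP : ∀ i, ∃ S : Finset (Fin n → ℝ), S.Nonempty ∧ P i = convexHull ℝ (S : Set (Fin n → ℝ)))
    (w : Fin n → ℝ) :
    exposedFace (cayley P)
        (Sum.elim w fun k =>
          sInf ((fun x => ∑ j, x j * w j) '' P 0) -
            sInf ((fun x => ∑ j, x j * w j) '' P k.succ)) =
      cayley (fun i => exposedFace (P i) w) := by
  choose S hSne hPS using hP
  set μ : Fin (m + 1) → ℝ := fun i => (S i).inf' (hSne i) (lfun w) with hμ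
  have hμle : ∀ i, ∀ s ∈ (S i : Set (Fin n → ℝ)), μ i ≤ lfun w s :=
    fun i s hs => Finset.inf'_le _ (Finset.mem_coe.1 hs)
  have hμex : ∀ i, ∃ s ∈ (S i : Set (Fin n → ℝ)), lfun w s = μ i := by
    intro i
    obtain ⟨s, hs, h⟩ := (S i).exists_mem_eq_inf' (hSne i) (lfun w)
    exact ⟨s, Finset.mem_coe.2 hs, h.symm⟩
  have hsInf : ∀ i, sInf ((fun x : Fin n → ℝ => ∑ j, x j * w j) '' P i) = μ i := by
    intro i
    have hco : (fun x : Fin n → ℝ => ∑ j, x j * w j) = ⇑(lfun w) := rfl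
    rw [hco, hPS i]
    exact (isLeast_image_hull (lfun w) (S i) (μ i) (hμle i) (hμex i)).csInf_eq
  simp only [hsInf]
  set v : (Fin n ⊕ Fin m) → ℝ := Sum.elim w fun k => μ 0 - μ k.succ with hv
  have hkey : ∀ (i : Fin (m + 1)) (p : Fin n → ℝ),
      lfun v (Sum.elim p (cayLabel i)) = lfun w p + (μ 0 - μ i) := by
    intro i p
    rw [lfun_apply, lfun_apply, Fintype.sum_sum_type]
    simp only [hv, Sum.elim_inl, Sum.elim_inr]
    congr 1
    induction i using Fin.cases with
    | zero => simp [cayLabel]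
    | succ k =>
      have hlab : ∀ j : Fin m, cayLabel k.succ j = if j = k then 1 else 0 := by
        intro j
        simp [cayLabel, Fin.val_succ, Fin.ext_iff]
      simp only [hlab, ite_mul, one_mul, zero_mul]
      rw [Finset.sum_ite_eq' Finset.univ k]
      simp
  have hφ : ∀ i : Fin (m + 1),
      (fun p : Fin n → ℝ => Sum.elim p (cayLabel i)) = ⇑(cayMap (cayLabel i)) := fun _ => rfl
  have hcayP : cayley P = convexHull ℝ
      (⋃ i, (fun p : Fin n → ℝ => Sum.elim p (cayLabel i)) '' (S i : Set (Fin n → ℝ))) := by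
    rw [cayley, ← hull_iUnion_hull
      (fun i => (fun p : Fin n → ℝ => Sum.elim p (cayLabel i)) '' (S i : Set (Fin n → ℝ)))]
    congr 1
    apply Set.iUnion_congr
    intro i
    rw [hPS i, hφ i, AffineMap.image_convexHull]
  have hface : ∀ i, exposedFace (P i) w =
      convexHull ℝ {s ∈ (S i : Set (Fin n → ℝ)) | lfun w s = μ i} := by
    intro i
    rw [hPS i]
    exact main_face w (S i) (μ i) (hμle i) (hμex i)
  have hRHS : cayley (fun i => exposedFace (P i) w) = convexHull ℝ
      (⋃ i, (fun p : Fin n → ℝ => Sum.elim p (cayLabel i)) ''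
        {s ∈ (S i : Set (Fin n → ℝ)) | lfun w s = μ i}) := by
    rw [cayley, ← hull_iUnion_hull
      (fun i => (fun p : Fin n → ℝ => Sum.elim p (cayLabel i)) ''
        {s ∈ (S i : Set (Fin n → ℝ)) | lfun w s = μ i})]
    congr 1
    apply Set.iUnion_congr
    intro i
    rw [hface i, hφ i, AffineMap.image_convexHull]
  set T : Set ((Fin n ⊕ Fin m) → ℝ) :=
    ⋃ i, (fun p : Fin n → ℝ => Sum.elim p (cayLabel i)) '' (S i : Set (Fin n → ℝ)) with hT
  have h1 : ∀ t ∈ T, μ 0 ≤ lfun v t := by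
    intro t ht
    obtain ⟨i, s, hs, rfl⟩ := by simpa only [hT, Set.mem_iUnion] using ht
    rw [hkey]
    have := hμle i s hs
    linarith
  have h2 : ∃ t ∈ T, lfun v t = μ 0 := by
    obtain ⟨s, hs, hws⟩ := hμex 0
    refine ⟨Sum.elim s (cayLabel 0), Set.mem_iUnion.2 ⟨0, ⟨s, hs, rfl⟩⟩, ?_⟩
    rw [hkey, hws]
    ring
  have hsets : {t ∈ T | lfun v t = μ 0} =
      ⋃ i, (fun p : Fin n → ℝ => Sum.elim p (cayLabel i)) ''
        {s ∈ (S i : Set (Fin n → ℝ)) | lfun w s = μ i} := by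
    ext t
    constructor
    · rintro ⟨ht, hvt⟩
      obtain ⟨i, s, hs, rfl⟩ := by simpa only [hT, Set.mem_iUnion] using ht
      rw [hkey] at hvt
      refine Set.mem_iUnion.2 ⟨i, ⟨s, ⟨hs, by linarith⟩, rfl⟩⟩
    · intro ht
      obtain ⟨i, s, ⟨hs, hws⟩, rfl⟩ := Set.mem_iUnion.1 ht
      refine ⟨Set.mem_iUnion.2 ⟨i, ⟨s, hs, rfl⟩⟩, ?_⟩
      rw [hkey, hws]
      ring
  rw [hcayP, hRHS, main_face v T (μ 0) h1 h2, hsets]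
end

section
/- Let 1 ≤ m ≤ n and let A = (A_0, A_1, …, A_m) be an admissible tuple of finite subsets of ℕ^n. Then for generic coefficients the following holds for the sparse system F = (f_0,…,f_m) with support A: at every point x ∈ ℂ^n with f_1(x) = ⋯ = f_m(x) = 0, the n × m Jacobian matrix (∂f_i/∂x_j(x))_{1≤j≤n, 1≤i≤m} has full rank m, i.e., the gradients ∇f_1(x), …, ∇f_m(x) are linearly independent over ℂ. -/
open MvPolynomial

set_option maxHeartbeats 1000000
set_option synthInstance.maxHeartbeats 400000

lemma prod_X_pow_eq_monomial' {σ : Type*} {R : Type*} [Fintype σ] [CommSemiring R] (α : σ → ℕ) :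
    (∏ k, (X k : MvPolynomial σ R) ^ α k) = monomial (Finsupp.equivFunOnFinite.symm α) 1 := by
  rw [monomial_eq, map_one, one_mul, Finsupp.prod_fintype]
  · simp [Finsupp.equivFunOnFinite]; rfl
  · intro i; exact pow_zero _

/-- exponent vector of the `j`-th partial derivative of the monomial `x^α` -/
def dexp {n : ℕ} (j : Fin n) (α : Fin n → ℕ) : Fin n → ℕ :=
  fun k => α k - (if k = j then 1 else 0)

lemma eval_prod_X_pow {n : ℕ} {R : Type*} [CommSemiring R] (x : Fin n → R) (α : Fin n → ℕ) :
    eval x (∏ k, (X k : MvPolynomial (Fin n) R) ^ α k) = ∏ k, x k ^ α k := by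
  rw [map_prod]
  simp

lemma eval_pderiv_prod_X_pow {n : ℕ} (x : Fin n → ℂ) (j : Fin n) (α : Fin n → ℕ) :
    eval x (pderiv j (∏ k, (X k : MvPolynomial (Fin n) ℂ) ^ α k))
      = (α j : ℂ) * ∏ k, x k ^ dexp j α k := by
  rw [prod_X_pow_eq_monomial', pderiv_monomial, eval_monomial, one_mul]
  rw [Finsupp.prod_fintype _ _ (fun i => pow_zero _)]
  have h1 : (Finsupp.equivFunOnFinite.symm α) j = α j := rfl
  rw [h1]
  congr 1
  refine Finset.prod_congr rfl fun k _ => ?_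
  congr 1
  rw [Finsupp.tsub_apply]
  have h2 : (Finsupp.equivFunOnFinite.symm α) k = α k := rfl
  rw [h2, Finsupp.single_apply, dexp]
  congr 1
  simp [eq_comm]

lemma eval_sparsePoly {n m : ℕ} (A : Fin (m + 1) → Finset (Fin n → ℕ))
    (c : (Σ i : Fin (m + 1), {α // α ∈ A i}) → ℂ) (i : Fin (m + 1)) (x : Fin n → ℂ) :
    eval x (sparsePoly A c i)
      = ∑ α ∈ (A i).attach, c ⟨i, α⟩ * ∏ k, x k ^ (α : Fin n → ℕ) k := by
  unfold sparsePoly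
  rw [map_sum]
  refine Finset.sum_congr rfl fun α _ => ?_
  rw [smul_eq_C_mul, map_mul, eval_C, eval_prod_X_pow]

lemma eval_pderiv_sparsePoly {n m : ℕ} (A : Fin (m + 1) → Finset (Fin n → ℕ))
    (c : (Σ i : Fin (m + 1), {α // α ∈ A i}) → ℂ) (i : Fin (m + 1)) (j : Fin n) (x : Fin n → ℂ) :
    eval x (pderiv j (sparsePoly A c i))
      = ∑ α ∈ (A i).attach,
          c ⟨i, α⟩ * ((α : Fin n → ℕ) j : ℂ) * ∏ k, x k ^ dexp j (α : Fin n → ℕ) k := by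
  unfold sparsePoly
  rw [map_sum, map_sum]
  refine Finset.sum_congr rfl fun α _ => ?_
  have h1 : pderiv j ((c ⟨i, α⟩) • ∏ k, (X k : MvPolynomial (Fin n) ℂ) ^ (α : Fin n → ℕ) k)
      = (c ⟨i, α⟩) • pderiv j (∏ k, (X k : MvPolynomial (Fin n) ℂ) ^ (α : Fin n → ℕ) k) :=
    Derivation.map_smul _ _ _
  rw [h1, smul_eq_C_mul, map_mul, eval_C, eval_pderiv_prod_X_pow, mul_assoc]

lemma admissible_facts {n m : ℕ} {A : Fin (m + 1) → Finset (Fin n → ℕ)}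
    (hA : IsAdmissible A) (i : Fin (m + 1)) :
    (0 : Fin n → ℕ) ∈ A i ∧
      ∀ j : Fin n, ∃ α ∈ A i, 1 ≤ α j ∧ ∀ k, k ≠ j → α k = 0 := by
  classical
  obtain ⟨v, hv, hset⟩ := hA.1 i
  -- v = 0
  have hv0 : v = 0 := by
    funext j
    obtain ⟨α₀, hα₀, hα₀j⟩ := hA.2.1 i j
    have hej : (fun k => if k = j then (1:ℝ) else 0) ∈
        {w : Fin n → ℝ | ∀ k, 0 ≤ w k} := by
      intro k; dsimp only; split <;> norm_num
    rw [← hset] at hej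
    have h1 := hej α₀ hα₀
    have hsum : ∀ β : Fin n → ℕ,
        (∑ k, (β k : ℝ) * (if k = j then (1:ℝ) else 0)) = (β j : ℝ) := by
      intro β
      rw [Finset.sum_eq_single j]
      · simp
      · intro b _ hb; simp [hb]
      · intro hj; exact absurd (Finset.mem_univ j) hj
    rw [hsum, hsum, hα₀j] at h1
    have : (v j : ℝ) = 0 := le_antisymm (by simpa using h1) (by positivity)
    exact_mod_cast this
  subst hv0
  refine ⟨hv, fun j => ?_⟩
  by_contra hcon
  push_neg at hcon
  -- build the separating vector
  set t : ℝ := (∑ α ∈ A i, (α j : ℝ)) + 1 with ht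
  have ht0 : 0 ≤ t := by positivity
  have htα : ∀ α ∈ A i, (α j : ℝ) + 1 ≤ t := by
    intro α hα
    have : (α j : ℝ) ≤ ∑ α' ∈ A i, (α' j : ℝ) :=
      Finset.single_le_sum (f := fun α' => ((α' j : ℕ) : ℝ)) (fun _ _ => by positivity) hα
    simpa [ht] using this
  set w : Fin n → ℝ := fun k => if k = j then (-1 : ℝ) else t with hw
  have hwmem : w ∈ {w : Fin n → ℝ | ∀ α ∈ A i, (∑ k, ((0:Fin n → ℕ) k : ℝ) * w k) ≤ ∑ k, (α k : ℝ) * w k} := by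
    intro α hα
    have hlhs : (∑ k, ((0:Fin n → ℕ) k : ℝ) * w k) = 0 := by simp
    rw [hlhs]
    have hsplit : (∑ k, (α k : ℝ) * w k)
        = (α j : ℝ) * (-1) + ∑ k ∈ Finset.univ.erase j, (α k : ℝ) * t := by
      rw [← Finset.add_sum_erase _ _ (Finset.mem_univ j)]
      congr 1
      · simp [hw]
      · refine Finset.sum_congr rfl fun k hk => ?_
        simp [hw, Finset.ne_of_mem_erase hk]
    rw [hsplit]
    by_cases hαj : 1 ≤ α j
    · obtain ⟨k₀, hk₀j, hk₀⟩ := hcon α hα hαj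
      have h1 : t ≤ ∑ k ∈ Finset.univ.erase j, (α k : ℝ) * t := by
        have hterm : t ≤ (α k₀ : ℝ) * t := by
          nlinarith [ht0, (by exact_mod_cast Nat.one_le_iff_ne_zero.2 hk₀ : (1:ℝ) ≤ (α k₀ : ℝ))]
        refine le_trans hterm ?_
        refine Finset.single_le_sum (f := fun k => (α k : ℝ) * t) (fun _ _ => by positivity) ?_
        exact Finset.mem_erase.2 ⟨hk₀j, Finset.mem_univ k₀⟩
      have h2 := htα α hα
      nlinarith
    · have : α j = 0 := by omega
      rw [this]
      have : 0 ≤ ∑ k ∈ Finset.univ.erase j, (α k : ℝ) * t :=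
        Finset.sum_nonneg fun k _ => by positivity
      simpa using this
  have : ∀ α ∈ A i, (∑ k, ((0:Fin n → ℕ) k : ℝ) * w k) ≤ ∑ k, (α k : ℝ) * w k := hwmem
  have hwRHS : w ∈ {w : Fin n → ℝ | ∀ k, 0 ≤ w k} := by
    rw [← hset]
    exact this
  have := hwRHS j
  simp [hw] at this
  linarith

theorem exists_annihilator {Y κ : Type} [Fintype Y] [Fintype κ]
    (h : Fintype.card Y < Fintype.card κ)
    (t : κ → FractionRing (MvPolynomial Y ℂ)) :
    ∃ G : MvPolynomial κ ℂ, G ≠ 0 ∧ aeval t G = 0 := by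
  classical
  by_contra hcon
  push_neg at hcon
  have hinj : Function.Injective (aeval t : MvPolynomial κ ℂ →ₐ[ℂ] _) := by
    intro p q hpq
    by_contra hne
    exact (hcon _ (sub_ne_zero.mpr hne)) (by rw [map_sub, hpq, sub_self])
  set R := MvPolynomial Y ℂ
  let ι : R →+* FractionRing R := algebraMap R (FractionRing R)
  have hι : Function.Injective ι := IsFractionRing.injective R (FractionRing R)
  have hden : ∀ k : κ, ∃ pq : R × R, pq.2 ≠ 0 ∧ ι pq.1 / ι pq.2 = t k := by
    intro k
    obtain ⟨x, y, hy, hxy⟩ := IsFractionRing.div_surjective (A := R) (t k)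
    exact ⟨⟨x, y⟩, nonZeroDivisors.ne_zero hy, hxy⟩
  choose pq hpq using hden
  set num := fun k => (pq k).1
  set den := fun k => (pq k).2
  set q : R := ∏ k, den k with hq
  have hq0 : q ≠ 0 := Finset.prod_ne_zero_iff.2 fun k _ => (hpq k).1
  set p : κ → R := fun k => num k * ∏ k' ∈ Finset.univ.erase k, den k' with hp
  have hpt : ∀ k, ι (p k) = t k * ι q := by
    intro k
    have hden0 : ι (den k) ≠ 0 := fun h0 => (hpq k).1 (hι (by simpa using h0))
    have hqsplit : ι q = ι (den k) * ι (∏ k' ∈ Finset.univ.erase k, den k') := by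
      rw [hq, ← map_mul, Finset.mul_prod_erase _ _ (Finset.mem_univ k)]
    rw [hqsplit, ← (hpq k).2, ← mul_assoc, div_mul_cancel₀ _ hden0, hp, map_mul]
  set N := Fintype.card κ with hN
  have hN1 : 1 ≤ N := lt_of_le_of_lt (Nat.zero_le _) h
  set M := (Finset.univ.sup fun k => (p k).totalDegree) ⊔ q.totalDegree with hM
  set Cc := N * M + 1 with hCc
  set B := Cc ^ (N - 1) + 1 with hB
  set E := N * B * M with hE
  set u : (κ → Fin B) → R := fun β =>
    (∏ k, p k ^ (β k : ℕ)) * q ^ (N * B - ∑ k, (β k : ℕ)) with hu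
  have hsumle : ∀ β : κ → Fin B, (∑ k, (β k : ℕ)) ≤ N * B := by
    intro β
    calc (∑ k, (β k : ℕ)) ≤ ∑ _k : κ, B := Finset.sum_le_sum fun k _ => (β k).2.le
    _ = N * B := by simp [hN, mul_comm]
  have hudeg : ∀ β, (u β).totalDegree ≤ E := by
    intro β
    have h1 : (∏ k, p k ^ (β k : ℕ)).totalDegree ≤ (∑ k, (β k : ℕ)) * M := by
      refine le_trans (totalDegree_finset_prod _ _) ?_
      rw [Finset.sum_mul]
      refine Finset.sum_le_sum fun k _ => le_trans (totalDegree_pow _ _) ?_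
      refine Nat.mul_le_mul_left _ (le_trans ?_ (le_sup_left (b := q.totalDegree)))
      exact Finset.le_sup (f := fun k => (p k).totalDegree) (Finset.mem_univ k)
    have h2 : (q ^ (N * B - ∑ k, (β k : ℕ))).totalDegree ≤ (N * B - ∑ k, (β k : ℕ)) * M :=
      le_trans (totalDegree_pow _ _) (Nat.mul_le_mul_left _ le_sup_right)
    calc (u β).totalDegree ≤ _ + _ := totalDegree_mul _ _
    _ ≤ (∑ k, (β k : ℕ)) * M + (N * B - ∑ k, (β k : ℕ)) * M := Nat.add_le_add h1 h2
    _ = E := by rw [← Nat.add_mul, Nat.add_sub_cancel' (hsumle β), hE]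
  -- linear independence of u
  have hLIu : LinearIndependent ℂ u := by
    have hinj2 : Function.Injective
        (fun β : κ → Fin B => Finsupp.equivFunOnFinite.symm (fun k => ((β k : ℕ)))) := by
      intro a b hab
      funext k
      have h2 := congrArg (fun f => Finsupp.equivFunOnFinite f k) hab
      simp only [Finsupp.equivFunOnFinite_apply, Equiv.apply_symm_apply] at h2
      exact Fin.val_injective h2
    have hmon : LinearIndependent ℂ
        (fun β : κ → Fin B => (∏ k, (X k : MvPolynomial κ ℂ) ^ (β k : ℕ))) := by
      have hb := ((basisMonomials κ ℂ).linearIndependent).comp _ hinj2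
      have heq : (fun β : κ → Fin B => (∏ k, (X k : MvPolynomial κ ℂ) ^ (β k : ℕ)))
          = (⇑(basisMonomials κ ℂ) ∘ fun β : κ → Fin B =>
              Finsupp.equivFunOnFinite.symm (fun k => ((β k : ℕ)))) := by
        funext β
        rw [prod_X_pow_eq_monomial']
        simp [coe_basisMonomials, Function.comp]
      rw [heq]
      exact hb
    have hLI2 := hmon.map' (aeval t).toLinearMap (LinearMap.ker_eq_bot.2 hinj)
    have hLI3 : LinearIndependent ℂ (fun β : κ → Fin B => ∏ k, t k ^ (β k : ℕ)) := by
      have heq : (fun β : κ → Fin B => ∏ k, t k ^ (β k : ℕ))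
          = ((aeval t).toLinearMap ∘ fun β : κ → Fin B =>
              (∏ k, (X k : MvPolynomial κ ℂ) ^ (β k : ℕ))) := by
        funext β
        simp [map_prod]
      rw [heq]
      exact hLI2
    have hq0' : ι q ≠ 0 := fun h0 => hq0 (hι (by simpa using h0))
    have hLI4 := hLI3.map' (LinearMap.mulRight ℂ (ι q ^ (N * B)))
      (LinearMap.ker_eq_bot.2 (fun a b hab => by
        simpa using mul_right_cancel₀ (pow_ne_zero _ hq0') hab))
    have hLI5 : LinearIndependent ℂ (fun β => ι (u β)) := by
      have heq : (fun β => ι (u β)) = ((LinearMap.mulRight ℂ (ι q ^ (N * B))) ∘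
          fun β : κ → Fin B => ∏ k, t k ^ (β k : ℕ)) := by
        funext β
        simp only [hu, map_mul, map_prod, map_pow, LinearMap.mulRight_apply, Function.comp]
        rw [Finset.prod_congr rfl fun k _ => by rw [hpt k, mul_pow]]
        rw [Finset.prod_mul_distrib, Finset.prod_pow_eq_pow_sum]
        rw [mul_assoc, ← pow_add, Nat.add_sub_cancel' (hsumle β)]
      rw [heq]
      exact hLI4
    exact hLI5.of_comp (IsScalarTower.toAlgHom ℂ R (FractionRing R)).toLinearMap
  -- span bound
  set g : (Y → Fin (E + 1)) → R := fun γ =>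
    monomial (Finsupp.equivFunOnFinite.symm fun y => (γ y : ℕ)) 1 with hg
  set W := Submodule.span ℂ (Set.range g) with hW
  have hmemW : ∀ β, u β ∈ W := by
    intro β
    have hdeg := hudeg β
    have hrepr := support_sum_monomial_coeff (u β)
    rw [← hrepr]
    refine Submodule.sum_mem _ fun s hs => ?_
    have hsy : ∀ y, s y ≤ E := by
      intro y
      refine le_trans ?_ (le_trans (le_totalDegree hs) hdeg)
      by_cases hy : y ∈ s.support
      · exact Finset.single_le_sum (f := fun y => s y) (fun _ _ => Nat.zero_le _) hy
      · simp [Finsupp.notMem_support_iff.1 hy]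
    have hs' : s = Finsupp.equivFunOnFinite.symm
        fun y => ((⟨s y, Nat.lt_succ_of_le (hsy y)⟩ : Fin (E+1)) : ℕ) := by
      ext y; simp [Finsupp.equivFunOnFinite]
    have hmono : monomial s (coeff s (u β)) =
        coeff s (u β) • g (fun y => ⟨s y, Nat.lt_succ_of_le (hsy y)⟩) := by
      rw [hg]
      simp only []
      rw [← hs', smul_monomial]
      simp
    rw [hmono]
    exact Submodule.smul_mem _ _ (Submodule.subset_span (Set.mem_range_self _))
  haveI : FiniteDimensional ℂ W := FiniteDimensional.span_of_finite ℂ (Set.finite_range g)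
  have hcard : Fintype.card (κ → Fin B) ≤ Module.finrank ℂ W := by
    have hu' : LinearIndependent ℂ (fun β => (⟨u β, hmemW β⟩ : W)) := by
      refine LinearIndependent.of_comp W.subtype ?_
      have heq : (W.subtype ∘ fun β => (⟨u β, hmemW β⟩ : W)) = u := rfl
      rw [heq]
      exact hLIu
    exact hu'.fintype_card_le_finrank
  have hrank : Module.finrank ℂ W ≤ Fintype.card (Y → Fin (E + 1)) := by
    refine le_trans (finrank_span_le_card _) ?_
    rw [Set.toFinset_range]
    exact le_trans (Finset.card_image_le) (by simp)
  simp only [Fintype.card_fun, Fintype.card_fin] at hcard hrank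
  have hfinal : B ^ N ≤ (E + 1) ^ (Fintype.card Y) := le_trans hcard hrank
  have hB1 : 1 ≤ B := Nat.le_add_left 1 _
  have hYN : Fintype.card Y ≤ N - 1 := Nat.le_sub_one_of_lt h
  have h1 : (E + 1) ^ (Fintype.card Y) ≤ (E + 1) ^ (N - 1) :=
    Nat.pow_le_pow_right (Nat.succ_le_succ (Nat.zero_le _)) hYN
  have h2 : E + 1 ≤ B * Cc := by
    have he : E = N * B * M := hE
    have hcc : Cc = N * M + 1 := hCc
    have h2a : B * Cc = B * (N * M) + B := by rw [hcc]; ring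
    have h2b : N * B * M = B * (N * M) := by ring
    omega
  have h3 : (E + 1) ^ (N - 1) ≤ (B * Cc) ^ (N - 1) := Nat.pow_le_pow_left h2 _
  have h4 : (B * Cc) ^ (N - 1) = B ^ (N - 1) * Cc ^ (N - 1) := mul_pow _ _ _
  have h5 : B ^ (N - 1) * Cc ^ (N - 1) < B ^ (N - 1) * B :=
    (Nat.mul_lt_mul_left (Nat.pow_pos (n := N-1) hB1)).2 (by omega)
  have h6 : B ^ (N - 1) * B = B ^ N := by
    rw [← pow_succ]
    congr 1
    omega
  omega

theorem key_vanish {n m : ℕ} (A : Fin (m + 1) → Finset (Fin n → ℕ))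
    (h0 : ∀ i : Fin (m + 1), (0 : Fin n → ℕ) ∈ A i)
    (S : Finset (Fin n)) (i0 : Fin m)
    (hpure : ∀ j : Fin n, ∃ α ∈ A i0.succ, 1 ≤ α j ∧ ∀ k, k ≠ j → α k = 0) :
    ∃ G : MvPolynomial (Σ i : Fin (m + 1), {α // α ∈ A i}) ℂ, G ≠ 0 ∧
      ∀ (c : (Σ i : Fin (m + 1), {α // α ∈ A i}) → ℂ) (x : Fin n → ℂ) (lam : Fin m → ℂ),
        lam i0 = 1 →
        (∀ j : Fin n, x j ≠ 0 ↔ j ∈ S) →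
        (∀ i : Fin m, eval x (sparsePoly A c i.succ) = 0) →
        (∀ j : Fin n, ∑ i : Fin m, lam i * eval x (pderiv j (sparsePoly A c i.succ)) = 0) →
        eval c G = 0 := by
  classical
  choose P hP1 hPj hP0 using hpure
  set κT := (Σ i : Fin (m + 1), {α // α ∈ A i}) with hκT
  let kp : Fin n → κT := fun j => ⟨i0.succ, ⟨P j, hP1 j⟩⟩
  let k₀ : Fin m → κT := fun i => ⟨i.succ, ⟨0, h0 i.succ⟩⟩
  let Slv : κT → Prop := fun k => (k.1 ≠ 0 ∧ (k.2 : Fin n → ℕ) = 0) ∨ (∃ j ∈ S, k = kp j)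
  let Y := {j : Fin n // j ∈ S} ⊕ ({i : Fin m // i ≠ i0} ⊕ {k : κT // ¬ Slv k})
  let R0 := MvPolynomial Y ℂ
  let Δ : R0 := ∏ j : {j : Fin n // j ∈ S}, X (Sum.inl j)
  let T0 := Localization.Away Δ
  letI algCT : Algebra ℂ T0 := ((algebraMap R0 T0).comp (algebraMap ℂ R0)).toAlgebra
  let ι0 : R0 →+* T0 := algebraMap R0 T0
  let xh : Fin n → T0 := fun k => if h : k ∈ S then ι0 (X (Sum.inl ⟨k, h⟩)) else 0
  let lh : Fin m → T0 := fun i => if h : i = i0 then 1 else ι0 (X (Sum.inr (Sum.inl ⟨i, h⟩)))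
  let cF : κT → T0 := fun k => if h : ¬ Slv k then ι0 (X (Sum.inr (Sum.inr ⟨k, h⟩))) else 0
  let inv : {j : Fin n // j ∈ S} → T0 := fun j =>
    ι0 (∏ j' ∈ Finset.univ.erase j, X (Sum.inl j')) * IsLocalization.Away.invSelf Δ
  let Gs : {j : Fin n // j ∈ S} → T0 := fun j => ∑ i : Fin m, lh i *
    ∑ α ∈ (A i.succ).attach,
      (if (⟨i.succ, α⟩ : κT) = kp j then 0 else cF ⟨i.succ, α⟩) *
        (((α : Fin n → ℕ) (j : Fin n) : ℕ) : T0) *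
          ∏ k, xh k ^ dexp (j : Fin n) (α : Fin n → ℕ) k
  let Pv : {j : Fin n // j ∈ S} → T0 := fun j =>
    -(inv j ^ (P j j - 1) * algebraMap ℂ T0 (((P (j:Fin n) (j:Fin n) : ℕ) : ℂ))⁻¹ * Gs j)
  let cM : κT → T0 := fun k => cF k + ∑ j : {j : Fin n // j ∈ S}, if k = kp j then Pv j else 0
  let ch : κT → T0 := fun k => if (k.1 ≠ 0 ∧ (k.2 : Fin n → ℕ) = 0) then
    -(∑ α ∈ (A k.1).attach, (if (α : Fin n → ℕ) = 0 then 0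
        else cM ⟨k.1, α⟩ * ∏ kk, xh kk ^ (α : Fin n → ℕ) kk)) else cM k
  -- basic injectivity facts
  have hkp1 : ∀ j, (kp j).1 = i0.succ := fun j => rfl
  have hkpval : ∀ j, ((kp j).2 : Fin n → ℕ) = P j := fun j => rfl
  have hkpinj : ∀ j j' : Fin n, kp j = kp j' → j = j' := by
    intro j j' h
    by_contra hne
    have hval : P j = P j' := congrArg (fun k : κT => (k.2 : Fin n → ℕ)) h
    have h1 : P j j = 0 := by rw [hval]; exact hP0 j' j hne
    have h2 := hPj j
    omega
  have hkp_ne_k₀ : ∀ j i, kp j ≠ k₀ i := by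
    intro j i h
    have hval : P j = (0 : Fin n → ℕ) := congrArg (fun k : κT => (k.2 : Fin n → ℕ)) h
    have h2 := hPj j
    rw [hval] at h2
    simp at h2
  have hk₀inj : ∀ i i', k₀ i = k₀ i' → i = i' := by
    intro i i' h
    have := congrArg Sigma.fst h
    exact Fin.succ_injective _ this
  have hSlvkp : ∀ j : {j : Fin n // j ∈ S}, Slv (kp j) := fun j => Or.inr ⟨j, j.2, rfl⟩
  have hSlvk₀ : ∀ i, Slv (k₀ i) := fun i => Or.inl ⟨Fin.succ_ne_zero i, rfl⟩
  -- cardinality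
  have hcard : Fintype.card Y < Fintype.card κT := by
    have hinj : Function.Injective (fun z : Y ⊕ Unit =>
        Sum.elim (Sum.elim (fun j : {j : Fin n // j ∈ S} => kp (j : Fin n))
          (Sum.elim (fun i : {i : Fin m // i ≠ i0} => k₀ (i : Fin m))
            (fun k : {k : κT // ¬ Slv k} => (k : κT)))) (fun _ => k₀ i0) z) := by
      have hfree : ∀ (k : {k : κT // ¬ Slv k}) (k' : κT), Slv k' → (k : κT) ≠ k' := by
        intro k k' hs h
        exact k.2 (h ▸ hs)
      rintro ((⟨aj, haj⟩ | ⟨ai, hai⟩ | ⟨ak, hak⟩) | au) ((⟨bj, hbj⟩ | ⟨bi, hbi⟩ | ⟨bk, hbk⟩) | bu) hab <;>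
        simp only [Sum.elim_inl, Sum.elim_inr] at hab
      · exact congrArg _ (congrArg _ (Subtype.ext (hkpinj _ _ hab)))
      · exact absurd hab (hkp_ne_k₀ _ _)
      · exact absurd (show Slv bk by rw [← hab]; exact hSlvkp ⟨aj, haj⟩) hbk
      · exact absurd hab (hkp_ne_k₀ _ _)
      · exact absurd hab.symm (hkp_ne_k₀ _ _)
      · exact congrArg _ (congrArg _ (congrArg _ (Subtype.ext (hk₀inj _ _ hab))))
      · exact absurd (show Slv bk by rw [← hab]; exact hSlvk₀ _) hbk
      · exact absurd (hk₀inj _ _ hab) hai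
      · exact absurd (show Slv ak by rw [hab]; exact hSlvkp ⟨bj, hbj⟩) hak
      · exact absurd (show Slv ak by rw [hab]; exact hSlvk₀ _) hak
      · exact congrArg _ (congrArg _ (congrArg _ (Subtype.ext hab)))
      · exact absurd (show Slv ak by rw [hab]; exact hSlvk₀ _) hak
      · exact absurd hab.symm (hkp_ne_k₀ _ _)
      · exact absurd (hk₀inj _ _ hab).symm hbi
      · exact absurd (show Slv bk by rw [← hab]; exact hSlvk₀ _) hbk
      · exact congrArg _ (Subsingleton.elim _ _)
    have hle := Fintype.card_le_of_injective _ hinj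
    rw [Fintype.card_sum, Fintype.card_unit] at hle
    omega
  -- the embedding into the fraction field
  have hΔ0 : Δ ≠ 0 :=
    Finset.prod_ne_zero_iff.2 fun j _ => MvPolynomial.X_ne_zero _
  let L0 := FractionRing R0
  have hΔunit : IsUnit (algebraMap R0 L0 Δ) := by
    rw [isUnit_iff_ne_zero, Ne, map_eq_zero_iff _ (IsFractionRing.injective R0 L0)]
    exact hΔ0
  let toL : T0 →+* L0 := IsLocalization.Away.lift Δ hΔunit
  have htoL : ∀ r, toL (ι0 r) = algebraMap R0 L0 r := fun r => IsLocalization.Away.lift_eq Δ hΔunit r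
  have htoLinj : Function.Injective toL := by
    intro a b hab
    obtain ⟨⟨r, s⟩, hrs⟩ := IsLocalization.surj (Submonoid.powers Δ) (a - b)
    have hmap := congrArg toL hrs
    rw [map_mul, map_sub, hab, sub_self, zero_mul, htoL] at hmap
    have hr0 : r = 0 :=
      (map_eq_zero_iff _ (IsFractionRing.injective R0 L0)).1 hmap.symm
    rw [hr0, map_zero] at hrs
    have hu := IsLocalization.map_units T0 s
    have h0 : a - b = 0 := by
      rcases hu with ⟨u, hu⟩
      have := congrArg (fun t => t * ((u⁻¹ : T0ˣ) : T0)) hrs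
      simpa [← hu, mul_assoc] using this
    exact sub_eq_zero.1 h0
  obtain ⟨G, hG0, hGann⟩ := exists_annihilator hcard (fun k => toL (ch k))
  refine ⟨G, hG0, ?_⟩
  intro c x lam hlam hxS hvan hgrad
  let pt : Y → ℂ := Sum.elim (fun j => x j) (Sum.elim (fun i => lam i.1) (fun k => c k.1))
  have hunit : IsUnit ((eval pt : R0 →+* ℂ) Δ) := by
    rw [isUnit_iff_ne_zero]
    have hΔev : (eval pt : R0 →+* ℂ) Δ = ∏ j : {j : Fin n // j ∈ S}, x (j : Fin n) := by
      rw [map_prod]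
      exact Finset.prod_congr rfl fun j _ => by rw [eval_X]; rfl
    rw [hΔev]
    exact Finset.prod_ne_zero_iff.2 fun j _ => (hxS (j : Fin n)).2 j.2
  let ev : T0 →+* ℂ := IsLocalization.Away.lift Δ hunit
  have hev : ∀ r, ev (ι0 r) = eval pt r := fun r => IsLocalization.Away.lift_eq Δ hunit r
  have hevC : ∀ z : ℂ, ev (algebraMap ℂ T0 z) = z := by
    intro z
    have h1 : algebraMap ℂ T0 z = ι0 (algebraMap ℂ R0 z) := rfl
    rw [h1, hev, MvPolynomial.algebraMap_eq, eval_C]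
  have hevx : ∀ k, ev (xh k) = x k := by
    intro k
    by_cases hk : k ∈ S
    · show ev (dite _ _ _) = x k
      rw [dif_pos hk, hev, eval_X]
      rfl
    · show ev (dite _ _ _) = x k
      rw [dif_neg hk, map_zero]
      have := hxS k
      by_contra hne
      exact hk (this.1 (Ne.symm hne))
  have hevl : ∀ i, ev (lh i) = lam i := by
    intro i
    by_cases hi : i = i0
    · show ev (dite _ _ _) = lam i
      rw [dif_pos hi, map_one, hi, hlam]
    · show ev (dite _ _ _) = lam i
      rw [dif_neg hi, hev, eval_X]
      rfl
  have hevcF : ∀ k, ev (cF k) = if Slv k then 0 else c k := by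
    intro k
    by_cases hk : Slv k
    · show ev (dite _ _ _) = _
      rw [dif_neg (not_not.2 hk), map_zero, if_pos hk]
    · show ev (dite _ _ _) = _
      rw [dif_pos hk, hev, eval_X, if_neg hk]
      rfl
  have hevinv : ∀ j : {j : Fin n // j ∈ S}, ev (inv j) = (x j)⁻¹ := by
    intro j
    have hmul : xh (j : Fin n) * inv j = 1 := by
      show (dite _ _ _) * _ = 1
      rw [dif_pos j.2]
      show ι0 (X (Sum.inl ⟨(j : Fin n), j.2⟩)) * (ι0 _ * _) = 1
      rw [← mul_assoc, ← map_mul]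
      have hjj : (⟨(j : Fin n), j.2⟩ : {j : Fin n // j ∈ S}) = j := Subtype.coe_eta j j.2
      rw [hjj, Finset.mul_prod_erase Finset.univ (fun j' => (X (Sum.inl j') : R0))
        (Finset.mem_univ j)]
      exact IsLocalization.Away.mul_invSelf Δ
    have hx0 : x (j : Fin n) ≠ 0 := (hxS _).2 j.2
    have := congrArg ev hmul
    rw [map_mul, map_one, hevx] at this
    exact (inv_eq_of_mul_eq_one_right this).symm
  have hprodP : ∀ j : {j : Fin n // j ∈ S},
      (∏ k, x k ^ dexp (j : Fin n) (P (j : Fin n)) k) = x (j : Fin n) ^ (P j j - 1) := by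
    intro j
    rw [Finset.prod_eq_single (j : Fin n)]
    · congr 1
      unfold dexp
      rw [if_pos rfl]
    · intro k _ hk
      have h1 : P (j : Fin n) k = 0 := hP0 _ k hk
      unfold dexp
      rw [h1, if_neg hk]
      simp
    · intro h
      exact absurd (Finset.mem_univ _) h
  have hevGs : ∀ j : {j : Fin n // j ∈ S},
      ev (Gs j) = -(c (kp j) * ((P j j : ℕ) : ℂ) * x (j : Fin n) ^ (P j j - 1)) := by
    intro j
    have hgj := hgrad (j : Fin n)
    have hgj' : ∑ i : Fin m, lam i * ∑ α ∈ (A i.succ).attach,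
        c ⟨i.succ, α⟩ * (((α : Fin n → ℕ) (j : Fin n) : ℕ) : ℂ) *
          ∏ k, x k ^ dexp (j : Fin n) (α : Fin n → ℕ) k = 0 := by
      rw [← hgj]
      exact Finset.sum_congr rfl fun i _ => by rw [eval_pderiv_sparsePoly]
    have E1 : ev (Gs j) = ∑ i : Fin m, lam i * ∑ α ∈ (A i.succ).attach,
        (if (⟨i.succ, α⟩ : κT) = kp (j : Fin n) then 0
          else (if Slv ⟨i.succ, α⟩ then 0 else c ⟨i.succ, α⟩)) *
          (((α : Fin n → ℕ) (j : Fin n) : ℕ) : ℂ) *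
            ∏ k, x k ^ dexp (j : Fin n) (α : Fin n → ℕ) k := by
      show ev (∑ i : Fin m, _) = _
      rw [map_sum]
      refine Finset.sum_congr rfl fun i _ => ?_
      rw [map_mul, hevl, map_sum]
      congr 1
      refine Finset.sum_congr rfl fun α _ => ?_
      rw [map_mul, map_mul, map_natCast, map_prod]
      congr 2
      · rw [apply_ite ev, map_zero, hevcF]
      · funext k
        rw [map_pow, hevx]
    have E2 : ∀ (i : Fin m), ∀ α ∈ (A i.succ).attach,
        (if (⟨i.succ, α⟩ : κT) = kp (j : Fin n) then 0
          else (if Slv ⟨i.succ, α⟩ then 0 else c ⟨i.succ, α⟩)) *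
          (((α : Fin n → ℕ) (j : Fin n) : ℕ) : ℂ) *
            ∏ k, x k ^ dexp (j : Fin n) (α : Fin n → ℕ) k
        = c ⟨i.succ, α⟩ * (((α : Fin n → ℕ) (j : Fin n) : ℕ) : ℂ) *
            (∏ k, x k ^ dexp (j : Fin n) (α : Fin n → ℕ) k)
          - (if (⟨i.succ, α⟩ : κT) = kp (j : Fin n) then
              c ⟨i.succ, α⟩ * (((α : Fin n → ℕ) (j : Fin n) : ℕ) : ℂ) *
                (∏ k, x k ^ dexp (j : Fin n) (α : Fin n → ℕ) k) else 0) := by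
      intro i α _
      by_cases hkpα : (⟨i.succ, α⟩ : κT) = kp (j : Fin n)
      · rw [if_pos hkpα, if_pos hkpα]
        ring
      · rw [if_neg hkpα, if_neg hkpα, sub_zero]
        by_cases hslv : Slv ⟨i.succ, α⟩
        · rw [if_pos hslv]
          have hαj : (α : Fin n → ℕ) (j : Fin n) = 0 := by
            rcases hslv with ⟨_, hc⟩ | ⟨j', hj', hkj'⟩
            · have : (α : Fin n → ℕ) = 0 := hc
              rw [this]
              rfl
            · have hval : (α : Fin n → ℕ) = P j' :=
                congrArg (fun k : κT => (k.2 : Fin n → ℕ)) hkj'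
              have hne : (j : Fin n) ≠ j' := by
                intro h
                apply hkpα
                rw [hkj', h]
              rw [hval]
              exact hP0 j' (j : Fin n) hne
          rw [hαj]
          push_cast
          ring
        · rw [if_neg hslv]
    have E3 : ∀ i : Fin m,
        (∑ α ∈ (A i.succ).attach,
          (if (⟨i.succ, α⟩ : κT) = kp (j : Fin n) then
              c ⟨i.succ, α⟩ * (((α : Fin n → ℕ) (j : Fin n) : ℕ) : ℂ) *
                (∏ k, x k ^ dexp (j : Fin n) (α : Fin n → ℕ) k) else 0))
        = (if i = i0 then c (kp (j : Fin n)) * ((P j j : ℕ) : ℂ) *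
            (∏ k, x k ^ dexp (j : Fin n) (P (j : Fin n)) k) else 0) := by
      intro i
      by_cases hi : i = i0
      · subst hi
        have hcond : ∀ α : {α // α ∈ A i.succ},
            ((⟨i.succ, α⟩ : κT) = kp (j : Fin n)) ↔ (α = ⟨P (j : Fin n), hP1 (j : Fin n)⟩) := by
          intro α
          constructor
          · intro h
            exact Subtype.ext (congrArg (fun k : κT => (k.2 : Fin n → ℕ)) h)
          · intro h
            rw [h]
        rw [if_pos rfl]
        rw [Finset.sum_congr rfl (fun α _ => by rw [if_congr (hcond α) rfl rfl])]
        rw [Finset.sum_ite_eq' ((A i.succ).attach)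
          (⟨P (j : Fin n), hP1 (j : Fin n)⟩ : {α // α ∈ A i.succ})
          (fun α => c ⟨i.succ, α⟩ * (((α : Fin n → ℕ) (j : Fin n) : ℕ) : ℂ) *
            (∏ k, x k ^ dexp (j : Fin n) (α : Fin n → ℕ) k))]
        rw [if_pos (Finset.mem_attach _ _)]
      · rw [if_neg hi]
        refine Finset.sum_eq_zero fun α _ => ?_
        rw [if_neg]
        intro h
        exact hi (Fin.succ_injective _ (congrArg Sigma.fst h))
    rw [E1]
    rw [Finset.sum_congr rfl (fun i _ => by
      rw [Finset.sum_congr rfl (E2 i), Finset.sum_sub_distrib, E3 i, mul_sub])]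
    rw [Finset.sum_sub_distrib, hgj', zero_sub]
    rw [Finset.sum_congr rfl (fun i _ => by rw [mul_ite, mul_zero])]
    rw [Finset.sum_ite_eq' Finset.univ i0
      (fun i => lam i * (c (kp (j : Fin n)) * ((P j j : ℕ) : ℂ) *
        (∏ k, x k ^ dexp (j : Fin n) (P (j : Fin n)) k)))]
    rw [if_pos (Finset.mem_univ _), hlam, one_mul, hprodP j]
  have hevPv : ∀ j : {j : Fin n // j ∈ S}, ev (Pv j) = c (kp j) := by
    intro j
    show ev (-(inv j ^ (P j j - 1) * algebraMap ℂ T0 (((P (j : Fin n) (j : Fin n) : ℕ) : ℂ))⁻¹ * Gs j)) = _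
    rw [map_neg, map_mul, map_mul, map_pow, hevinv, hevC, hevGs]
    have hx0 : x (j : Fin n) ≠ 0 := (hxS _).2 j.2
    have hPne : ((P (j : Fin n) (j : Fin n) : ℕ) : ℂ) ≠ 0 := by
      have := hPj (j : Fin n)
      exact_mod_cast Nat.cast_ne_zero.2 (by omega)
    field_simp
    ring_nf
    rw [← mul_pow, mul_inv_cancel₀ hx0, one_pow, one_mul]
  have hevcM : ∀ k : κT, ¬(k.1 ≠ 0 ∧ (k.2 : Fin n → ℕ) = 0) → ev (cM k) = c k := by
    intro k hk
    show ev (cF k + ∑ j : {j : Fin n // j ∈ S}, if k = kp (j : Fin n) then Pv j else 0) = c k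
    rw [map_add, map_sum]
    by_cases hslv : Slv k
    · rcases hslv with hconst | ⟨j', hj', hkp⟩
      · exact absurd hconst hk
      · have h1 : ev (cF k) = 0 := by
          rw [hevcF, if_pos (Or.inr ⟨j', hj', hkp⟩)]
        rw [h1, zero_add]
        have hcond : ∀ jj : {j : Fin n // j ∈ S}, (k = kp (jj : Fin n)) ↔ jj = ⟨j', hj'⟩ := by
          intro jj
          constructor
          · intro h
            have : j' = (jj : Fin n) := hkpinj _ _ (by rw [← hkp, h])
            exact Subtype.ext this.symm
          · intro h
            rw [h]
            exact hkp
        rw [Finset.sum_congr rfl (fun jj _ => by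
          rw [apply_ite ev, map_zero, if_congr (hcond jj) rfl rfl])]
        rw [Finset.sum_ite_eq' Finset.univ (⟨j', hj'⟩ : {j : Fin n // j ∈ S})
          (fun jj => ev (Pv jj))]
        rw [if_pos (Finset.mem_univ _), hevPv, ← hkp]
    · rw [hevcF, if_neg hslv]
      rw [Finset.sum_congr rfl (fun jj _ => by
        rw [if_neg (fun h => hslv (by rw [h]; exact hSlvkp jj)), map_zero])]
      rw [Finset.sum_const_zero, add_zero]
  have hevch : ∀ k, ev (ch k) = c k := by
    intro k
    by_cases hc : (k.1 ≠ 0 ∧ (k.2 : Fin n → ℕ) = 0)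
    · obtain ⟨i1, α⟩ := k
      obtain ⟨hne0, hval0⟩ := hc
      obtain ⟨i, rfl⟩ : ∃ i : Fin m, i1 = i.succ :=
        ⟨i1.pred hne0, (Fin.succ_pred _ _).symm⟩
      have hα : α = ⟨0, h0 i.succ⟩ := Subtype.ext hval0
      subst hα
      show ev (ch (k₀ i)) = c (k₀ i)
      have hch : ch (k₀ i) = -(∑ α ∈ (A i.succ).attach, (if (α : Fin n → ℕ) = 0 then 0
          else cM ⟨i.succ, α⟩ * ∏ kk, xh kk ^ (α : Fin n → ℕ) kk)) := by
        show (if _ then _ else _) = _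
        rw [if_pos ⟨Fin.succ_ne_zero i, rfl⟩]
      rw [hch, map_neg, map_sum]
      -- evaluate each term
      have hterm : ∀ α ∈ (A i.succ).attach,
          ev (if (α : Fin n → ℕ) = 0 then 0
            else cM ⟨i.succ, α⟩ * ∏ kk, xh kk ^ (α : Fin n → ℕ) kk)
          = (if α = (⟨0, h0 i.succ⟩ : {α // α ∈ A i.succ}) then 0
            else c ⟨i.succ, α⟩ * ∏ kk, x kk ^ (α : Fin n → ℕ) kk) := by
        intro α _
        by_cases hα0 : (α : Fin n → ℕ) = 0
        · rw [if_pos hα0, map_zero, if_pos (Subtype.ext hα0)]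
        · rw [if_neg hα0, if_neg (fun h => hα0 (by rw [h]))]
          rw [map_mul, map_prod]
          congr 1
          · exact hevcM ⟨i.succ, α⟩ (fun h => hα0 h.2)
          · exact Finset.prod_congr rfl fun kk _ => by rw [map_pow, hevx]
      rw [Finset.sum_congr rfl hterm]
      -- compare with the vanishing equation
      have hre := hvan i
      rw [eval_sparsePoly] at hre
      have hsplit : ∑ α ∈ (A i.succ).attach,
          c ⟨i.succ, α⟩ * ∏ kk, x kk ^ (α : Fin n → ℕ) kk
          = c (k₀ i) + ∑ α ∈ ((A i.succ).attach).erase (⟨0, h0 i.succ⟩ : {α // α ∈ A i.succ}),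
              c ⟨i.succ, α⟩ * ∏ kk, x kk ^ (α : Fin n → ℕ) kk := by
        rw [← Finset.add_sum_erase _ _ (Finset.mem_attach _ _)]
        congr 1
        show c (k₀ i) * (∏ kk, x kk ^ ((0 : Fin n → ℕ) kk)) = c (k₀ i)
        simp
      have hite : ∑ α ∈ (A i.succ).attach,
          (if α = (⟨0, h0 i.succ⟩ : {α // α ∈ A i.succ}) then 0
            else c ⟨i.succ, α⟩ * ∏ kk, x kk ^ (α : Fin n → ℕ) kk)
          = ∑ α ∈ ((A i.succ).attach).erase (⟨0, h0 i.succ⟩ : {α // α ∈ A i.succ}),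
              c ⟨i.succ, α⟩ * ∏ kk, x kk ^ (α : Fin n → ℕ) kk := by
        rw [← Finset.add_sum_erase _ _
          (Finset.mem_attach (A i.succ) (⟨0, h0 i.succ⟩ : {α // α ∈ A i.succ}))]
        rw [if_pos rfl, zero_add]
        refine Finset.sum_congr rfl fun α hα => ?_
        rw [if_neg (Finset.ne_of_mem_erase hα)]
      rw [hite]
      rw [hsplit] at hre
      exact neg_eq_of_add_eq_zero_left hre
    · show ev (if (k.1 ≠ 0 ∧ (k.2 : Fin n → ℕ) = 0) then
          -(∑ α ∈ (A k.1).attach, (if (α : Fin n → ℕ) = 0 then 0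
              else cM ⟨k.1, α⟩ * ∏ kk, xh kk ^ (α : Fin n → ℕ) kk)) else cM k) = c k
      rw [if_neg hc]
      exact hevcM k hc
  -- wrap up
  have h1 : aeval (fun k => toL (ch k)) G = 0 := hGann
  have h2 : aeval ch G = 0 := by
    apply htoLinj
    rw [map_zero]
    rw [show (aeval ch G : T0) = eval₂ (algebraMap ℂ T0) ch G from rfl]
    rw [eval₂_comp_left toL (algebraMap ℂ T0) ch G]
    have e1 : toL.comp (algebraMap ℂ T0) = algebraMap ℂ L0 := by
      ext z
      show toL (algebraMap ℂ T0 z) = algebraMap ℂ L0 z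
      have hz : algebraMap ℂ T0 z = ι0 (algebraMap ℂ R0 z) := rfl
      rw [hz, htoL, IsScalarTower.algebraMap_apply ℂ R0 L0]
    rw [e1]
    have e2 : (⇑toL ∘ ch) = fun k => toL (ch k) := rfl
    rw [e2]
    exact hGann
  have h3 : eval c G = ev (aeval ch G) := by
    rw [show (aeval ch G : T0) = eval₂ (algebraMap ℂ T0) ch G from rfl]
    rw [eval₂_comp_left ev (algebraMap ℂ T0) ch G]
    rw [show ev.comp (algebraMap ℂ T0) = RingHom.id ℂ from RingHom.ext hevC]
    rw [show (⇑ev ∘ ch) = c from funext hevch]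
    rfl
  rw [h3, h2, map_zero]
/-- For an admissible support tuple, generically at every point of the
variety `f_1 = ⋯ = f_m = 0` the `n × m` Jacobian `(∂f_i/∂x_j)` has full rank `m`,
i.e. the gradients `∇f_1, …, ∇f_m` are linearly independent. -/
theorem jacobian_full_rank_on_variety {n m : ℕ} (hm : 1 ≤ m) (hmn : m ≤ n)
    (A : Fin (m + 1) → Finset (Fin n → ℕ)) (hA : IsAdmissible A) :
    ∃ G : MvPolynomial (Σ i : Fin (m + 1), {α // α ∈ A i}) ℂ, G ≠ 0 ∧
      ∀ c : (Σ i : Fin (m + 1), {α // α ∈ A i}) → ℂ, eval c G ≠ 0 →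
        ∀ x : Fin n → ℂ, (∀ i : Fin m, eval x (sparsePoly A c i.succ) = 0) →
          (Matrix.of fun (j : Fin n) (i : Fin m) =>
              eval x (pderiv j (sparsePoly A c i.succ))).rank = m ∧
            LinearIndependent ℂ
              (fun (i : Fin m) (j : Fin n) => eval x (pderiv j (sparsePoly A c i.succ))) := by
  classical
  have hfacts := fun i => admissible_facts hA i
  have h0 : ∀ i, (0 : Fin n → ℕ) ∈ A i := fun i => (hfacts i).1
  have hkey := fun (S : Finset (Fin n)) (i0 : Fin m) =>
    key_vanish A h0 S i0 ((hfacts i0.succ).2)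
  choose GG hGG0 hGGP using hkey
  refine ⟨∏ S : Finset (Fin n), ∏ i0 : Fin m, GG S i0, ?_, ?_⟩
  · exact Finset.prod_ne_zero_iff.2 fun S _ => Finset.prod_ne_zero_iff.2 fun i0 _ => hGG0 S i0
  intro c hc x hvan
  have hfac : ∀ (S : Finset (Fin n)) (i0 : Fin m), eval c (GG S i0) ≠ 0 := by
    intro S i0 h
    apply hc
    rw [map_prod]
    refine Finset.prod_eq_zero (Finset.mem_univ S) ?_
    rw [map_prod]
    exact Finset.prod_eq_zero (Finset.mem_univ i0) h
  have hLI : LinearIndependent ℂ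
      (fun (i : Fin m) (j : Fin n) => eval x (pderiv j (sparsePoly A c i.succ))) := by
    by_contra hdep
    rw [Fintype.not_linearIndependent_iff] at hdep
    obtain ⟨g, hgsum, i0, hgi0⟩ := hdep
    set S : Finset (Fin n) := Finset.univ.filter (fun j => x j ≠ 0) with hS
    have hxS : ∀ j, x j ≠ 0 ↔ j ∈ S := fun j => by simp [hS]
    set lam : Fin m → ℂ := fun i => g i / g i0 with hlamdef
    have hlam : lam i0 = 1 := div_self hgi0
    have hgrad : ∀ j : Fin n,
        ∑ i : Fin m, lam i * eval x (pderiv j (sparsePoly A c i.succ)) = 0 := by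
      intro j
      have h2 : ∑ i : Fin m, g i * eval x (pderiv j (sparsePoly A c i.succ)) = 0 := by
        have h1 := congrFun hgsum j
        simpa [Finset.sum_apply] using h1
      calc ∑ i : Fin m, lam i * eval x (pderiv j (sparsePoly A c i.succ))
          = (∑ i : Fin m, g i * eval x (pderiv j (sparsePoly A c i.succ))) / g i0 := by
            rw [Finset.sum_div]
            exact Finset.sum_congr rfl fun i _ => by rw [hlamdef]; ring
        _ = 0 := by rw [h2, zero_div]
    exact hfac S i0 (hGGP S i0 c x lam hlam hxS hvan hgrad)
  refine ⟨?_, hLI⟩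
  -- rank computation
  set M : Matrix (Fin n) (Fin m) ℂ := Matrix.of fun (j : Fin n) (i : Fin m) =>
    eval x (pderiv j (sparsePoly A c i.succ)) with hM
  have hinj : Function.Injective M.mulVecLin := by
    rw [← LinearMap.ker_eq_bot]
    rw [LinearMap.ker_eq_bot']
    intro v hv
    have hv' : M.mulVec v = 0 := hv
    have hsum : ∑ i : Fin m, v i •
        (fun j => eval x (pderiv j (sparsePoly A c i.succ))) = 0 := by
      funext j
      have := congrFun hv' j
      rw [Matrix.mulVec, dotProduct] at this
      simpa [Finset.sum_apply, mul_comm, hM] using this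
    exact funext (Fintype.linearIndependent_iff.1 hLI v hsum)
  show Matrix.rank M = m
  rw [Matrix.rank, LinearMap.finrank_range_of_inj hinj]
  simp
end
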